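/- Let k ≥ 1 and let G be a group containing elements σ₁, …, σ_{2k} with σᵢσⱼσᵢ = σⱼσᵢσⱼ for |i−j| = 1 and σᵢσⱼ = σⱼσᵢ for |i−j| ≥ 2. Set x = σ₁σ₂⋯σ_k and y = σ_{k+1}σ_{k+2}⋯σ_{2k}. Then prod(x,y;2k+1) = prod(y,x;2k+1), i.e., x and y satisfy the Artin relation of odd length 2k+1. -/

import Mathlib

/-- `altProd a b ℓ` is the alternating product `a * b * a * ⋯` with `ℓ` factors, starting with `a`. -/
def altProd {G : Type*} [Monoid G] : G → G → ℕ → G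
  | _, _, 0 => 1
  | a, b, n + 1 => a * altProd b a n

private lemma altProd_odd {G : Type*} [Monoid G] (a b : G) (n : ℕ) :
    altProd a b (2 * n + 1) = (a * b) ^ n * a := by
  induction n generalizing a b with
  | zero => simp [altProd]
  | succ n ih =>
      have : 2 * (n + 1) + 1 = (2 * n + 1) + 1 + 1 := by ring
      rw [this, altProd, altProd, ih, pow_succ']
      group

private lemma mul_pow_alt {G : Type*} [Monoid G] (a b : G) (n : ℕ) :
    a * (b * a) ^ n = (a * b) ^ n * a := by
  induction n with
  | zero => simp
  | succ n ih =>
      rw [pow_succ', ← mul_assoc, ← mul_assoc a b a, mul_assoc (a * b) a, ih, ← mul_assoc,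
        ← pow_succ']

private lemma seg_comm {G : Type*} [Monoid G] (σ : ℕ → G) (j s n : ℕ)
    (h : ∀ m, s ≤ m → m < s + n → σ j * σ m = σ m * σ j) :
    σ j * ((List.range' s n).map σ).prod = ((List.range' s n).map σ).prod * σ j := by
  induction n generalizing s with
  | zero => simp
  | succ n ih =>
      rw [List.range'_succ]
      simp only [List.map_cons, List.prod_cons, ← mul_assoc]
      rw [h s (le_refl s) (by omega), mul_assoc, mul_assoc,
        ih (s + 1) (fun m hm hm' => h m (by omega) (by omega))]

section
variable {G : Type*} [Group G] (k : ℕ) (σ : ℕ → G)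

private lemma c_shift
    (hbraid : ∀ i, 1 ≤ i → i + 1 ≤ 2 * k → σ i * σ (i + 1) * σ i = σ (i + 1) * σ i * σ (i + 1))
    (hcomm : ∀ i j, 1 ≤ i → i + 2 ≤ j → j ≤ 2 * k → σ i * σ j = σ j * σ i)
    (i : ℕ) (hi1 : 1 ≤ i) (hi2 : i + 1 ≤ 2 * k) :
    ((List.range' 1 (2 * k)).map σ).prod * σ i = σ (i + 1) * ((List.range' 1 (2 * k)).map σ).prod := by
  have hsplit : List.range' 1 (2 * k) = List.range' 1 (i + 1) ++ List.range' (i + 2) (2 * k - (i + 1)) := by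
    have h := List.range'_append (s := 1) (m := i + 1) (n := 2 * k - (i + 1)) (step := 1)
    simp only [one_mul] at h
    rw [show (1 : ℕ) + (i + 1) = i + 2 by ring] at h
    rw [h]
    congr 1
    omega
  have h2 : List.range' i 2 = [i, i + 1] := by
    rw [show (2 : ℕ) = 1 + 1 from rfl, List.range'_succ, List.range'_succ]
    simp
  have hsplit2 : List.range' 1 (i + 1) = List.range' 1 (i - 1) ++ [i, i + 1] := by
    have h := List.range'_append (s := 1) (m := i - 1) (n := 2) (step := 1)
    simp only [one_mul] at h
    rw [show (1 : ℕ) + (i - 1) = i by omega] at h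
    rw [← h2, h]
    congr 1
    omega
  rw [hsplit]
  simp only [List.map_append, List.prod_append]
  set A := ((List.range' 1 (i + 1)).map σ).prod with hA
  set B := ((List.range' (i + 2) (2 * k - (i + 1))).map σ).prod with hB
  have hBc : B * σ i = σ i * B :=
    (seg_comm σ i (i + 2) (2 * k - (i + 1)) (fun m hm hm' => hcomm i m hi1 hm (by omega))).symm
  have hAc : A * σ i = σ (i + 1) * A := by
    rw [hA, hsplit2]
    simp only [List.map_append, List.prod_append, List.map_cons, List.map_nil, List.prod_cons,
      List.prod_nil, mul_one]
    set P := ((List.range' 1 (i - 1)).map σ).prod with hP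
    have hb := hbraid i hi1 hi2
    have hc : σ (i + 1) * P = P * σ (i + 1) :=
      seg_comm σ (i + 1) 1 (i - 1) (fun m hm hm' => (hcomm m (i + 1) hm (by omega) hi2).symm)
    calc P * (σ i * σ (i + 1)) * σ i
        = P * (σ i * σ (i + 1) * σ i) := by group
      _ = P * (σ (i + 1) * σ i * σ (i + 1)) := by rw [hb]
      _ = (P * σ (i + 1)) * (σ i * σ (i + 1)) := by group
      _ = (σ (i + 1) * P) * (σ i * σ (i + 1)) := by rw [hc]
      _ = σ (i + 1) * (P * (σ i * σ (i + 1))) := by group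
  rw [mul_assoc, hBc, ← mul_assoc, hAc, mul_assoc]

private lemma c_shift_seg
    (hbraid : ∀ i, 1 ≤ i → i + 1 ≤ 2 * k → σ i * σ (i + 1) * σ i = σ (i + 1) * σ i * σ (i + 1))
    (hcomm : ∀ i j, 1 ≤ i → i + 2 ≤ j → j ≤ 2 * k → σ i * σ j = σ j * σ i)
    (n : ℕ) : ∀ s, 1 ≤ s → s + n ≤ 2 * k →
    ((List.range' 1 (2 * k)).map σ).prod * ((List.range' s n).map σ).prod
      = ((List.range' (s + 1) n).map σ).prod * ((List.range' 1 (2 * k)).map σ).prod := by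
  induction n with
  | zero => simp
  | succ n ih =>
      intro s hs1 hs2
      rw [List.range'_succ, List.range'_succ]
      simp only [List.map_cons, List.prod_cons, ← mul_assoc]
      rw [c_shift k σ hbraid hcomm s hs1 (by omega), mul_assoc, mul_assoc,
        ih (s + 1) (by omega) (by omega)]

end

theorem odd_artin_relation {G : Type*} [Group G] (k : ℕ) (hk : 1 ≤ k) (σ : ℕ → G)
    (hbraid : ∀ i, 1 ≤ i → i + 1 ≤ 2 * k → σ i * σ (i + 1) * σ i = σ (i + 1) * σ i * σ (i + 1))
    (hcomm : ∀ i j, 1 ≤ i → i + 2 ≤ j → j ≤ 2 * k → σ i * σ j = σ j * σ i) :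
    altProd (((List.range k).map (fun i => σ (i + 1))).prod)
        (((List.range k).map (fun i => σ (k + 1 + i))).prod) (2 * k + 1)
      = altProd (((List.range k).map (fun i => σ (k + 1 + i))).prod)
        (((List.range k).map (fun i => σ (i + 1))).prod) (2 * k + 1) := by
  set x := (((List.range k).map (fun i => σ (i + 1))).prod) with hx
  set y := (((List.range k).map (fun i => σ (k + 1 + i))).prod) with hy
  have hx' : x = ((List.range' 1 k).map σ).prod := by
    rw [hx, List.range'_eq_map_range, List.map_map]
    congr 1
    ext i
    simp [Nat.add_comm]
  have hy' : y = ((List.range' (k + 1) k).map σ).prod := by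
    rw [hy, List.range'_eq_map_range, List.map_map]
    rfl
  set c := ((List.range' 1 (2 * k)).map σ).prod with hc
  have hxy : x * y = c := by
    rw [hx', hy', hc, ← List.prod_append, ← List.map_append]
    congr 2
    have h := List.range'_append (s := 1) (m := k) (n := k) (step := 1)
    simp only [one_mul] at h
    rw [show (1 : ℕ) + k = k + 1 by ring] at h
    rw [h]
    congr 1
    ring
  have key : ∀ j, j ≤ k → c ^ j * ((List.range' 1 k).map σ).prod
      = ((List.range' (1 + j) k).map σ).prod * c ^ j := by
    intro j
    induction j with
    | zero => simp
    | succ j ih =>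
        intro hj
        rw [pow_succ', mul_assoc, ih (by omega), ← mul_assoc,
          c_shift_seg k σ hbraid hcomm k (1 + j) (by omega) (by omega),
          mul_assoc, ← pow_succ']
        rfl
  have hmain : c ^ k * x = y * c ^ k := by
    rw [hx', hy', key k le_rfl, Nat.add_comm 1 k]
  rw [altProd_odd, altProd_odd, hxy, ← mul_pow_alt, hxy]
  exact hmain
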